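/- Let Σ₂ = {a,b} and w, w' ∈ Σ₂* with w ∼_k w' and m := ι(w) = ι(w') < k. Then m(w) = m(w'), and consequently β_i = β_i' for all i ∈ [m], where β_i, β_i' are the β-factors of the α-β-factorizations of w and w'. -/

import Mathlib

open List

variable {α : Type*} [DecidableEq α] [Fintype α]

/-- Simon `k`-congruence: `u` and `v` have the same scattered factors
(subsequences) of length at most `k`. -/
def SimonCongr (k : ℕ) (u v : List α) : Prop :=
  ∀ s : List α, s.length ≤ k → (s.Sublist u ↔ s.Sublist v)

/-- `w` is `k`-universal with respect to the alphabet `S`: every word of length `k`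
over `S` is a scattered factor of `w`. -/
def UniversalOn (S : Finset α) (k : ℕ) (w : List α) : Prop :=
  ∀ s : List α, s.length = k → (∀ x ∈ s, x ∈ S) → s.Sublist w

/-- The universality index of `w` w.r.t. the alphabet `S`. -/
noncomputable def iotaOn (S : Finset α) (w : List α) : ℕ :=
  sSup {k | UniversalOn S k w}

/-- The universality index of `w` w.r.t. the full alphabet. -/
noncomputable def iotaUniv (w : List α) : ℕ := iotaOn Finset.univ w

/-- `a` is an arch w.r.t. `S`: it contains every letter of `S`, and its last letter
belongs to `S` and occurs exactly once in `a`. -/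
def IsArchOn (S : Finset α) (a : List α) : Prop :=
  (∀ x ∈ S, x ∈ a) ∧ ∃ a' x, a = a' ++ [x] ∧ x ∈ S ∧ x ∉ a'

/-- `(ars, r)` is the arch factorization of `w` w.r.t. `S`. -/
def IsArchFactOn (S : Finset α) (w : List α) (ars : List (List α)) (r : List α) : Prop :=
  w = ars.flatten ++ r ∧ (∀ a ∈ ars, IsArchOn S a) ∧ ¬ (∀ x ∈ S, x ∈ r)

/-- `(A, B)` is the α-β-factorization of `w` with `m` arches:
`αᵢ₋₁βᵢ` (for `i ∈ [m]`) together with rest `α_m` is the arch factorization of `w`, and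
`(β_{m-i}α_{m-i})^R` together with rest `α₀^R` is the arch factorization of `w^R`. -/
def IsAlphaBetaFact (w : List α) (m : ℕ) (A B : ℕ → List α) : Prop :=
  IsArchFactOn Finset.univ w (List.ofFn fun i : Fin m => A i.val ++ B (i.val + 1)) (A m) ∧
  IsArchFactOn Finset.univ w.reverse
    (List.ofFn fun i : Fin m => (B (m - i.val) ++ A (m - i.val)).reverse) ((A 0).reverse)

/-- The concatenation `αᵢ βᵢ₊₁ αᵢ₊₁ ⋯ βⱼ αⱼ`. -/
def abSeg (A B : ℕ → List α) (i j : ℕ) : List α :=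
  A i ++ (((List.Ico (i + 1) (j + 1)).map fun l => B l ++ A l).flatten)

/-- The core of a `β`-factor: the factor with its first and last letter removed. -/
def coreOf (b : List α) : List α := (b.drop 1).dropLast

/-! ### Auxiliary lemmas -/

/-- Peeling a replicate prefix off a sublist relation whose head differs. -/
lemma peel_replicate {c d : Bool} (hne : c ≠ d) :
    ∀ (p : ℕ) {s l : List Bool}, (c :: l) <+ (List.replicate p d ++ s) → (c :: l) <+ s := by
  intro p
  induction p with
  | zero => intro s l h; simpa using h
  | succ n ih =>
    intro s l h
    rw [List.replicate_succ, List.cons_append] at h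
    cases h with
    | cons _ h => exact ih h
    | cons_cons => exact absurd rfl hne

/-- Structure of an arch over the binary alphabet. -/
lemma arch_struct {a : List Bool} (h : IsArchOn Finset.univ a) :
    ∃ x p, 1 ≤ p ∧ a = List.replicate p (!x) ++ [x] := by
  obtain ⟨hall, a', x, rfl, -, hx⟩ := h
  have ha' : a' = List.replicate a'.length (!x) := by
    rw [List.eq_replicate_iff]
    refine ⟨rfl, fun b hb => ?_⟩
    have : b ≠ x := fun hbx => hx (hbx ▸ hb)
    cases b <;> cases x <;> simp_all
  have hmem : (!x) ∈ a' ++ [x] := hall (!x) (Finset.mem_univ _)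
  have hlen : 1 ≤ a'.length := by
    rcases List.mem_append.mp hmem with h1 | h1
    · exact List.length_pos_iff.mpr (List.ne_nil_of_mem h1)
    · simp at h1
  exact ⟨x, a'.length, hlen, by rw [← ha']⟩

/-- A concatenation of `n` arches (plus anything) contains every word of length `≤ n`. -/
lemma univ_flatten :
    ∀ (ars : List (List Bool)) (r z : List Bool),
      (∀ a ∈ ars, IsArchOn Finset.univ a) → z.length ≤ ars.length → z <+ ars.flatten ++ r := by
  intro ars
  induction ars with
  | nil =>
    intro r z _ hz
    simp only [List.length_nil, Nat.le_zero, List.length_eq_zero_iff] at hz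
    simp [hz]
  | cons a tl ih =>
    intro r z hall hz
    cases z with
    | nil => exact List.nil_sublist _
    | cons c z' =>
      have hc : c ∈ a := (hall a (List.mem_cons_self)).1 c (Finset.mem_univ c)
      obtain ⟨s, t, hst⟩ := List.append_of_mem hc
      have h1 : z' <+ tl.flatten ++ r :=
        ih r z' (fun b hb => hall b (List.mem_cons_of_mem _ hb)) (by simpa using hz)
      have h2 : c :: z' <+ c :: (t ++ (tl.flatten ++ r)) :=
        (h1.trans (List.sublist_append_right t _)).cons₂ c
      have h3 : c :: (t ++ (tl.flatten ++ r)) <+ s ++ (c :: (t ++ (tl.flatten ++ r))) :=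
        List.sublist_append_right s _
      have h4 : (a :: tl).flatten ++ r = s ++ (c :: (t ++ (tl.flatten ++ r))) := by
        rw [List.flatten_cons, hst]; simp [List.append_assoc]
      rw [h4]
      exact h2.trans h3

/-- A word with `n` arches and a rest missing the letter `c` has a non-factor of
length `n+1`. -/
lemma exists_nonfactor {c : Bool} :
    ∀ (ars : List (List Bool)) (r : List Bool),
      (∀ a ∈ ars, IsArchOn Finset.univ a) → c ∉ r →
      ∃ v : List Bool, v.length = ars.length + 1 ∧ ¬ v <+ ars.flatten ++ r := by
  intro ars
  induction ars with
  | nil =>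
    intro r _ hc
    refine ⟨[c], rfl, fun h => hc ?_⟩
    have := h.subset ((List.mem_cons_self (a := c) (l := [])))
    simpa using this
  | cons a tl ih =>
    intro r hall hc
    obtain ⟨x, p, hp, ha⟩ := arch_struct (hall a (List.mem_cons_self))
    obtain ⟨v, hlen, hv⟩ := ih r (fun b hb => hall b (List.mem_cons_of_mem _ hb)) hc
    refine ⟨x :: v, by simp [hlen], fun h => hv ?_⟩
    have heq : (a :: tl).flatten ++ r
        = List.replicate p (!x) ++ (x :: (tl.flatten ++ r)) := by
      rw [List.flatten_cons, ha]; simp [List.append_assoc]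
    rw [heq] at h
    have h2 := peel_replicate (show x ≠ !x from (Bool.not_ne_self x).symm) p h
    exact List.cons_sublist_cons.mp h2

/-- Key lemma: `k`-congruent binary words with the same number `m < k` of arches
have the same modus (sequence of last letters of arches). -/
lemma modus_eq :
    ∀ (ars : List (List Bool)) (k : ℕ) (ars' : List (List Bool)) (r r' : List Bool),
      (∀ a ∈ ars, IsArchOn Finset.univ a) → (∀ a ∈ ars', IsArchOn Finset.univ a) →
      (¬ ∀ x ∈ (Finset.univ : Finset Bool), x ∈ r) →
      (¬ ∀ x ∈ (Finset.univ : Finset Bool), x ∈ r') →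
      ars.length = ars'.length → ars.length < k →
      SimonCongr k (ars.flatten ++ r) (ars'.flatten ++ r') →
      ars.map (·.getLast?) = ars'.map (·.getLast?) := by
  intro ars
  induction ars with
  | nil =>
    intro k ars' r r' _ _ _ _ hlen _ _
    rw [List.length_eq_zero_iff.mp hlen.symm]
  | cons a tl ih =>
    intro k ars' r r' hall hall' hr hr' hlen hk hcong
    cases ars' with
    | nil => simp at hlen
    | cons a' tl' =>
      obtain ⟨x, p, hp, ha⟩ := arch_struct (hall a (List.mem_cons_self))
      obtain ⟨x', q, hq, ha'⟩ := arch_struct (hall' a' (List.mem_cons_self))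
      have halltl : ∀ b ∈ tl, IsArchOn Finset.univ b :=
        fun b hb => hall b (List.mem_cons_of_mem _ hb)
      have halltl' : ∀ b ∈ tl', IsArchOn Finset.univ b :=
        fun b hb => hall' b (List.mem_cons_of_mem _ hb)
      have hlen' : tl'.length = tl.length := by simpa using hlen.symm
      obtain ⟨k', rfl⟩ : ∃ k', k = k' + 1 := ⟨k - 1, by omega⟩
      have hk2 : tl.length + 2 ≤ k' + 1 := by
        simp only [List.length_cons] at hk; omega
      have hwEq2 : (a :: tl).flatten ++ r
          = List.replicate p (!x) ++ (x :: (tl.flatten ++ r)) := by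
        rw [List.flatten_cons, ha]; simp [List.append_assoc]
      have hUW : ∀ z : List Bool, z.length ≤ tl.length → z <+ tl.flatten ++ r :=
        fun z hz => univ_flatten tl r z halltl hz
      have hUW' : ∀ z : List Bool, z.length ≤ tl.length → z <+ tl'.flatten ++ r' :=
        fun z hz => univ_flatten tl' r' z halltl' (by omega)
      -- Step 1: the last letters of the first arches agree
      have hx : x = x' := by
        by_contra hxx
        have hx' : x' = !x := by
          cases x <;> cases x' <;> simp at hxx ⊢
        have hw'Eq2 : (a' :: tl').flatten ++ r'
            = List.replicate q x ++ ((!x) :: (tl'.flatten ++ r')) := by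
          rw [List.flatten_cons, ha', hx']; simp [List.append_assoc, Bool.not_not]
        have hsx : [x] <+ List.replicate q x := by
          have := (List.replicate_sublist_replicate x).mpr hq
          rwa [List.replicate_one] at this
        have hsy : [(!x)] <+ List.replicate p (!x) := by
          have := (List.replicate_sublist_replicate (!x)).mpr hp
          rwa [List.replicate_one] at this
        -- pattern (¬x) x z in w
        have h_yx_w : ∀ z : List Bool, z.length ≤ tl.length →
            (!x) :: x :: z <+ (a :: tl).flatten ++ r := by
          intro z hz
          rw [hwEq2]
          have h2 : x :: z <+ x :: (tl.flatten ++ r) := (hUW z hz).cons₂ x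
          simpa using hsy.append h2
        -- pattern x (¬x) z in w'
        have h_xy_w' : ∀ z : List Bool, z.length ≤ tl.length →
            x :: (!x) :: z <+ (a' :: tl').flatten ++ r' := by
          intro z hz
          rw [hw'Eq2]
          have h2 : (!x) :: z <+ (!x) :: (tl'.flatten ++ r') := (hUW' z hz).cons₂ _
          simpa using hsx.append h2
        -- transfer + peel
        have hA' : ∀ z : List Bool, z.length ≤ tl.length → x :: z <+ tl'.flatten ++ r' := by
          intro z hz
          have h2 := (hcong _ (by simp; omega)).mp (h_yx_w z hz)
          rw [hw'Eq2] at h2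
          have h3 := peel_replicate (Bool.not_ne_self x) q h2
          exact List.cons_sublist_cons.mp h3
        have hA : ∀ z : List Bool, z.length ≤ tl.length → (!x) :: z <+ tl.flatten ++ r := by
          intro z hz
          have h2 := (hcong _ (by simp; omega)).mpr (h_xy_w' z hz)
          rw [hwEq2] at h2
          have h3 := peel_replicate (show x ≠ !x from (Bool.not_ne_self x).symm) p h2
          exact List.cons_sublist_cons.mp h3
        -- remaining two patterns in w'
        have h_xx_w' : ∀ z : List Bool, z.length ≤ tl.length →
            x :: x :: z <+ (a' :: tl').flatten ++ r' := by
          intro z hz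
          rw [hw'Eq2]
          have h2 : x :: z <+ (!x) :: (tl'.flatten ++ r') := (hA' z hz).cons _
          simpa using hsx.append h2
        have h_yy_w' : ∀ z : List Bool, z.length ≤ tl.length →
            (!x) :: (!x) :: z <+ (a' :: tl').flatten ++ r' := by
          intro z hz
          have h0 : (!x) :: (!x) :: z <+ (a :: tl).flatten ++ r := by
            rw [hwEq2]
            have h2 : (!x) :: z <+ x :: (tl.flatten ++ r) := (hA z hz).cons x
            simpa using hsy.append h2
          exact (hcong _ (by simp; omega)).mp h0
        -- every word of length (tl.length + 2) embeds into w'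
        have huniv : ∀ v : List Bool, v.length = tl.length + 2 →
            v <+ (a' :: tl').flatten ++ r' := by
          intro v hv
          rcases v with _ | ⟨v₀, v⟩
          · simp at hv
          rcases v with _ | ⟨v₁, z⟩
          · simp at hv
          have hz : z.length ≤ tl.length := by
            simp only [List.length_cons] at hv; omega
          have e₀ : v₀ = x ∨ v₀ = !x := by cases v₀ <;> cases x <;> simp
          have e₁ : v₁ = x ∨ v₁ = !x := by cases v₁ <;> cases x <;> simp
          rcases e₀ with rfl | rfl <;> rcases e₁ with rfl | rfl
          · exact h_xx_w' z hz
          · exact h_xy_w' z hz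
          · exact (hcong _ (by simp; omega)).mp (h_yx_w z hz)
          · exact h_yy_w' z hz
        -- contradiction with a non-factor of w'
        have hr'' : ∃ c : Bool, c ∉ r' := by
          by_contra hcon
          push_neg at hcon
          exact hr' fun c _ => hcon c
        obtain ⟨c, hc⟩ := hr''
        obtain ⟨v, hvl, hv⟩ := exists_nonfactor (c := c) (a' :: tl') r' hall' hc
        exact hv (huniv v (by rw [hvl]; simp only [List.length_cons]; omega))
      -- Step 2: peel the first arches and recurse
      subst hx
      have hw'Eq3 : (a' :: tl').flatten ++ r'
          = List.replicate q (!x) ++ (x :: (tl'.flatten ++ r')) := by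
        rw [List.flatten_cons, ha']; simp [List.append_assoc]
      have hcong' : SimonCongr k' (tl.flatten ++ r) (tl'.flatten ++ r') := by
        intro s hs
        constructor
        · intro hsW
          have h1 : x :: s <+ (a :: tl).flatten ++ r := by
            rw [hwEq2]
            exact (hsW.cons₂ x).trans (List.sublist_append_right _ _)
          have h2 := (hcong _ (by simp; omega)).mp h1
          rw [hw'Eq3] at h2
          have h3 := peel_replicate (show x ≠ !x from (Bool.not_ne_self x).symm) q h2
          exact List.cons_sublist_cons.mp h3
        · intro hsW
          have h1 : x :: s <+ (a' :: tl').flatten ++ r' := by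
            rw [hw'Eq3]
            exact (hsW.cons₂ x).trans (List.sublist_append_right _ _)
          have h2 := (hcong _ (by simp; omega)).mpr h1
          rw [hwEq2] at h2
          have h3 := peel_replicate (show x ≠ !x from (Bool.not_ne_self x).symm) p h2
          exact List.cons_sublist_cons.mp h3
      have htl := ih k' tl' r r' halltl halltl' hr hr' hlen'.symm (by omega) hcong'
      simp only [List.map_cons, htl, ha, ha', List.getLast?_concat]

/-- β-factors of an α-β-factorization are nonempty. -/
lemma beta_ne_nil {m : ℕ} {A B : ℕ → List Bool}
    (hfwd : ∀ i : Fin m, IsArchOn Finset.univ (A i.val ++ B (i.val + 1)))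
    (hrev : ∀ i : Fin m, IsArchOn Finset.univ ((B (m - i.val) ++ A (m - i.val)).reverse))
    (hrest : ¬ ∀ x ∈ (Finset.univ : Finset Bool), x ∈ A m) :
    ∀ i, 1 ≤ i → i ≤ m → B i ≠ [] := by
  intro i hi1 hi2
  intro hBi
  have hm1 : 1 ≤ m := le_trans hi1 hi2
  have hm0 : B m = [] → False := by
    intro hB
    have harch : ∀ c ∈ (Finset.univ : Finset Bool),
        c ∈ (B (m - 0) ++ A (m - 0)).reverse := (hrev ⟨0, by omega⟩).1
    apply hrest
    intro c hc
    have hcmem := harch c hc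
    simpa [hB] using hcmem
  have key : ∀ d j, 1 ≤ j → j ≤ m → m - j ≤ d → B j = [] → False := by
    intro d
    induction d with
    | zero =>
      intro j h1 h2 h3 hB
      exact hm0 (by rwa [show j = m from by omega] at hB)
    | succ d ihd =>
      intro j h1 h2 h3 hB
      rcases eq_or_lt_of_le h2 with rfl | hjm
      · exact hm0 hB
      · have harchf : IsArchOn Finset.univ (A j ++ B (j + 1)) := hfwd ⟨j, hjm⟩
        obtain ⟨x, p, hp, heq⟩ := arch_struct harchf
        have harchr : ∀ c ∈ (Finset.univ : Finset Bool),
            c ∈ (B (m - (m - j)) ++ A (m - (m - j))).reverse := (hrev ⟨m - j, by omega⟩).1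
        have hxA : x ∈ A j := by
          have := harchr x (Finset.mem_univ x)
          rw [show m - (m - j) = j from by omega] at this
          simpa [hB] using this
        by_cases hB1 : B (j + 1) = []
        · exact ihd (j + 1) (by omega) (by omega) (by omega) hB1
        · exfalso
          have hlenB : 1 ≤ (B (j + 1)).length := List.length_pos_iff.mpr hB1
          have hlenA : (A j).length ≤ p := by
            have := congrArg List.length heq
            simp only [List.length_append, List.length_replicate,
              List.length_cons, List.length_nil] at this
            omega
          have h4 : A j = ((List.replicate p (!x)) ++ [x]).take (A j).length := by
            rw [← heq, List.take_left]
          rw [List.take_append_of_le_length (by simpa using hlenA)] at h4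
          have hx2 : x ∈ (List.replicate p (!x)).take (A j).length := h4 ▸ hxA
          have := List.eq_of_mem_replicate ((List.take_sublist _ _).subset hx2)
          simp at this
  exact key (m - i) i hi1 hi2 le_rfl hBi

/-- a nonempty suffix of `(!x)^p x` has the form `(!x)^t x`. -/
lemma suffix_rep_concat {b : List Bool} (hb : b ≠ []) {y x : Bool} {p : ℕ}
    (h : b <:+ List.replicate p y ++ [x]) : ∃ t, b = List.replicate t y ++ [x] := by
  obtain ⟨s, hs⟩ := h
  rcases List.eq_nil_or_concat b with rfl | ⟨b₀, z, rfl⟩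
  · exact absurd rfl hb
  rw [List.concat_eq_append] at *
  rw [← List.append_assoc] at hs
  obtain ⟨hs1, hs2⟩ := List.append_inj' hs (by simp)
  obtain rfl : z = x := by simpa using hs2
  refine ⟨b₀.length, ?_⟩
  have hb₀ : b₀ = List.replicate b₀.length y := by
    rw [List.eq_replicate_iff]
    refine ⟨rfl, fun d hd => ?_⟩
    have : d ∈ List.replicate p y := hs1 ▸ List.mem_append_right s hd
    exact List.eq_of_mem_replicate this
  rw [← hb₀]

/-- a nonempty prefix of `u (!u)^q` has the form `u (!u)^t`. -/
lemma prefix_cons_rep {b : List Bool} (hb : b ≠ []) {u vv : Bool} {q : ℕ}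
    (h : b <+: u :: List.replicate q vv) : ∃ t, b = u :: List.replicate t vv := by
  obtain ⟨s, hs⟩ := h
  cases b with
  | nil => exact absurd rfl hb
  | cons c b₁ =>
    rw [List.cons_append] at hs
    injection hs with h1 h2
    subst h1
    refine ⟨b₁.length, ?_⟩
    have hb₁ : b₁ = List.replicate b₁.length vv := by
      rw [List.eq_replicate_iff]
      refine ⟨rfl, fun d hd => ?_⟩
      have : d ∈ List.replicate q vv := h2 ▸ List.mem_append_left s hd
      exact List.eq_of_mem_replicate this
    rw [← hb₁]

/-- Shape of a binary β-factor. -/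
lemma beta_shape {b : List Bool} (hb : b ≠ []) {x u vv : Bool} {p q : ℕ}
    (h1 : b <:+ List.replicate p (!x) ++ [x]) (h2 : b <+: u :: List.replicate q vv) :
    b = [x] ∨ b = [!x, x] := by
  obtain ⟨t, rfl⟩ := suffix_rep_concat hb h1
  obtain ⟨l, hbl⟩ := prefix_cons_rep hb h2
  cases t with
  | zero => left; simp
  | succ t' =>
    rw [List.replicate_succ, List.cons_append] at hbl
    injection hbl with e1 e2
    cases t' with
    | zero =>
      right; simp [List.replicate_succ]
    | succ t'' =>
      exfalso
      have hx1 : x = vv := by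
        have : x ∈ List.replicate l vv := e2 ▸ (by simp)
        exact List.eq_of_mem_replicate this
      have hx2 : (!x) = vv := by
        have : (!x) ∈ List.replicate l vv := e2 ▸ (by simp [List.replicate_succ])
        exact List.eq_of_mem_replicate this
      rw [← hx1] at hx2
      exact absurd hx2 (Bool.not_ne_self x)

/-- β-factors are determined by their first and last letters. -/
lemma beta_det {b b' : List Bool} {x x' : Bool}
    (h : b = [x] ∨ b = [!x, x]) (h' : b' = [x'] ∨ b' = [!x', x'])
    (hh : b.head? = b'.head?) (hl : b.getLast? = b'.getLast?) : b = b' := by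
  rcases h with rfl | rfl <;> rcases h' with rfl | rfl <;>
    simp_all <;> cases x <;> cases x' <;> simp_all

lemma simonCongr_reverse {k : ℕ} {u v : List Bool} (h : SimonCongr k u v) :
    SimonCongr k u.reverse v.reverse := by
  intro s hs
  have e1 : s <+ u.reverse ↔ s.reverse <+ u := by
    rw [← List.reverse_sublist, List.reverse_reverse]
  have e2 : s <+ v.reverse ↔ s.reverse <+ v := by
    rw [← List.reverse_sublist, List.reverse_reverse]
  rw [e1, e2]
  exact h s.reverse (by simpa using hs)

/-- `k`-congruent binary words with the same universality `m < k`
have the same modus and hence identical `β`-factors. -/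
theorem binary_simonCongr_implies_beta_eq (k m : ℕ) (w w' : List Bool)
    (A B A' B' : ℕ → List Bool)
    (hw : IsAlphaBetaFact w m A B) (hw' : IsAlphaBetaFact w' m A' B')
    (hiw : iotaUniv w = m) (hiw' : iotaUniv w' = m) (hmk : m < k)
    (h : SimonCongr k w w') :
    (∀ i, 1 ≤ i → i ≤ m → (B i).getLast? = (B' i).getLast?) ∧
    (∀ i, 1 ≤ i → i ≤ m → B i = B' i) := by
  obtain ⟨⟨hwEq, hwArch, hwRest⟩, ⟨hwrEq, hwrArch, hwrRest⟩⟩ := hw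
  obtain ⟨⟨hw'Eq, hw'Arch, hw'Rest⟩, ⟨hw'rEq, hw'rArch, hw'rRest⟩⟩ := hw'
  have hfwd : ∀ i : Fin m, IsArchOn Finset.univ (A i.val ++ B (i.val + 1)) :=
    fun i => hwArch _ (List.mem_ofFn.mpr ⟨i, rfl⟩)
  have hfwd' : ∀ i : Fin m, IsArchOn Finset.univ (A' i.val ++ B' (i.val + 1)) :=
    fun i => hw'Arch _ (List.mem_ofFn.mpr ⟨i, rfl⟩)
  have hrev : ∀ i : Fin m, IsArchOn Finset.univ ((B (m - i.val) ++ A (m - i.val)).reverse) :=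
    fun i => hwrArch _ (List.mem_ofFn.mpr ⟨i, rfl⟩)
  have hrev' : ∀ i : Fin m, IsArchOn Finset.univ ((B' (m - i.val) ++ A' (m - i.val)).reverse) :=
    fun i => hw'rArch _ (List.mem_ofFn.mpr ⟨i, rfl⟩)
  have hBne : ∀ i, 1 ≤ i → i ≤ m → B i ≠ [] := beta_ne_nil hfwd hrev hwRest
  have hB'ne : ∀ i, 1 ≤ i → i ≤ m → B' i ≠ [] := beta_ne_nil hfwd' hrev' hw'Rest
  -- forward modus equality
  have hf := h
  rw [hwEq, hw'Eq] at hf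
  have hmodf := modus_eq (List.ofFn fun i : Fin m => A i.val ++ B (i.val + 1)) k
    (List.ofFn fun i : Fin m => A' i.val ++ B' (i.val + 1)) (A m) (A' m)
    hwArch hw'Arch hwRest hw'Rest (by simp) (by simpa using hmk) hf
  rw [List.map_ofFn, List.map_ofFn] at hmodf
  have hlastf : ∀ i : Fin m,
      (A i.val ++ B (i.val + 1)).getLast? = (A' i.val ++ B' (i.val + 1)).getLast? :=
    fun i => congrFun (List.ofFn_inj.mp hmodf) i
  -- reverse modus equality
  have hrc := simonCongr_reverse h
  rw [hwrEq, hw'rEq] at hrc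
  have hmodr := modus_eq (List.ofFn fun i : Fin m => (B (m - i.val) ++ A (m - i.val)).reverse) k
    (List.ofFn fun i : Fin m => (B' (m - i.val) ++ A' (m - i.val)).reverse)
    ((A 0).reverse) ((A' 0).reverse)
    hwrArch hw'rArch hwrRest hw'rRest (by simp) (by simpa using hmk) hrc
  rw [List.map_ofFn, List.map_ofFn] at hmodr
  have hlastr : ∀ i : Fin m,
      ((B (m - i.val) ++ A (m - i.val)).reverse).getLast?
        = ((B' (m - i.val) ++ A' (m - i.val)).reverse).getLast? :=
    fun i => congrFun (List.ofFn_inj.mp hmodr) i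
  -- main pointwise argument
  have main : ∀ i, 1 ≤ i → i ≤ m → (B i).getLast? = (B' i).getLast? ∧ B i = B' i := by
    intro i hi1 hi2
    have hlt : i - 1 < m := by omega
    have hlt2 : m - i < m := by omega
    have e1 : i - 1 + 1 = i := by omega
    have e2 : m - (m - i) = i := by omega
    -- last letters equal
    have h0 : (A (i - 1) ++ B ((i - 1) + 1)).getLast?
        = (A' (i - 1) ++ B' ((i - 1) + 1)).getLast? := hlastf ⟨i - 1, hlt⟩
    rw [e1] at h0
    rw [List.getLast?_append_of_ne_nil _ (hBne i hi1 hi2),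
      List.getLast?_append_of_ne_nil _ (hB'ne i hi1 hi2)] at h0
    -- first letters equal
    have h1 : ((B (m - (m - i)) ++ A (m - (m - i))).reverse).getLast?
        = ((B' (m - (m - i)) ++ A' (m - (m - i))).reverse).getLast? := hlastr ⟨m - i, hlt2⟩
    rw [e2, List.getLast?_reverse, List.getLast?_reverse,
      List.head?_append_of_ne_nil _ (hBne i hi1 hi2),
      List.head?_append_of_ne_nil _ (hB'ne i hi1 hi2)] at h1
    -- shape of B i
    have harch : IsArchOn Finset.univ (A (i - 1) ++ B ((i - 1) + 1)) := hfwd ⟨i - 1, hlt⟩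
    rw [e1] at harch
    obtain ⟨x, p, hp, heq⟩ := arch_struct harch
    have hsuf : B i <:+ List.replicate p (!x) ++ [x] := heq ▸ List.suffix_append (A (i - 1)) (B i)
    have harchr : IsArchOn Finset.univ ((B (m - (m - i)) ++ A (m - (m - i))).reverse) :=
      hrev ⟨m - i, hlt2⟩
    rw [e2] at harchr
    obtain ⟨u, q, hq, heqr⟩ := arch_struct harchr
    have heqr2 : B i ++ A i = u :: List.replicate q (!u) := by
      have := congrArg List.reverse heqr
      simpa using this
    have hpre : B i <+: u :: List.replicate q (!u) := heqr2 ▸ List.prefix_append (B i) (A i)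
    have hshape := beta_shape (hBne i hi1 hi2) hsuf hpre
    -- shape of B' i
    have harch' : IsArchOn Finset.univ (A' (i - 1) ++ B' ((i - 1) + 1)) := hfwd' ⟨i - 1, hlt⟩
    rw [e1] at harch'
    obtain ⟨x', p', hp', heq'⟩ := arch_struct harch'
    have hsuf' : B' i <:+ List.replicate p' (!x') ++ [x'] :=
      heq' ▸ List.suffix_append (A' (i - 1)) (B' i)
    have harchr' : IsArchOn Finset.univ ((B' (m - (m - i)) ++ A' (m - (m - i))).reverse) :=
      hrev' ⟨m - i, hlt2⟩
    rw [e2] at harchr'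
    obtain ⟨u', q', hq', heqr'⟩ := arch_struct harchr'
    have heqr2' : B' i ++ A' i = u' :: List.replicate q' (!u') := by
      have := congrArg List.reverse heqr'
      simpa using this
    have hpre' : B' i <+: u' :: List.replicate q' (!u') :=
      heqr2' ▸ List.prefix_append (B' i) (A' i)
    have hshape' := beta_shape (hB'ne i hi1 hi2) hsuf' hpre'
    exact ⟨h0, beta_det hshape hshape' h1 h0⟩
  exact ⟨fun i h1 h2 => (main i h1 h2).1, fun i h1 h2 => (main i h1 h2).2⟩
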